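/- If a finite simple graph G has k pairwise disjoint connected dominating sets V_1, V_2, …, V_k such that for all i ≠ j, every connected component of the bipartite subgraph ⟨V_i, V_j⟩_G contains a cycle, then for every set S ⊆ V(G) \ (V_1 ∪ … ∪ V_k), the graph G − S obtained by deleting the vertices of S has k completely independent spanning trees. -/

import Mathlib

namespace CISTPaper

open SimpleGraph

variable {V : Type*} {W : Type*}

/-- `T` is a spanning tree of `G` (both graphs on the same vertex type). -/
def IsSpanningTree (G T : SimpleGraph V) : Prop :=
  T ≤ G ∧ T.IsTree

/-- The set of internal vertices of a graph: vertices of degree at least 2. -/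
def internalVerts (T : SimpleGraph V) : Set V :=
  {v | 2 ≤ (T.neighborSet v).ncard}

/-- `G` has `k` completely independent spanning trees: pairwise edge-disjoint
spanning trees whose sets of internal vertices are pairwise disjoint. -/
def HasCIST (G : SimpleGraph V) (k : ℕ) : Prop :=
  ∃ T : Fin k → SimpleGraph V,
    (∀ i, IsSpanningTree G (T i)) ∧
    ∀ i j, i ≠ j →
      Disjoint (T i).edgeSet (T j).edgeSet ∧
      Disjoint (internalVerts (T i)) (internalVerts (T j))

/-- `τ*(G)`: the maximum number of completely independent spanning trees of `G`. -/
noncomputable def tauStar (G : SimpleGraph V) : ℕ :=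
  sSup {k | HasCIST G k}

/-- `G` has `k` pairwise edge-disjoint spanning trees. -/
def HasEDST (G : SimpleGraph V) (k : ℕ) : Prop :=
  ∃ T : Fin k → SimpleGraph V,
    (∀ i, IsSpanningTree G (T i)) ∧
    ∀ i j, i ≠ j → Disjoint (T i).edgeSet (T j).edgeSet

/-- `τ(G)`: the maximum number of pairwise edge-disjoint spanning trees of `G`. -/
noncomputable def tau (G : SimpleGraph V) : ℕ :=
  sSup {k | HasEDST G k}

/-- The minimum degree `δ(G)`. -/
noncomputable def minDeg (G : SimpleGraph V) : ℕ :=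
  sInf (Set.range fun v => (G.neighborSet v).ncard)

/-- `H` is `k`-connected: `H` has more than `k` vertices and deleting any set of
fewer than `k` vertices leaves `H` connected. -/
def IsKConnected (H : SimpleGraph W) (k : ℕ) : Prop :=
  k < Nat.card W ∧ ∀ S : Set W, S.ncard < k → (H.induce Sᶜ).Connected

/-- The vertex connectivity `κ(H)`: the largest `k` such that `H` is `k`-connected. -/
noncomputable def kappa (H : SimpleGraph W) : ℕ :=
  sSup {k | IsKConnected H k}

/-- An edge-cut of `G`: a set of edges of `G` whose deletion disconnects `G`. -/
def IsEdgeCut (G : SimpleGraph V) (F : Set (Sym2 V)) : Prop :=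
  F ⊆ G.edgeSet ∧ ¬ (G.deleteEdges F).Connected

/-- `G` is super edge-connected: every minimum-size edge-cut consists of
all edges incident to a single vertex. -/
def SuperEdgeConnected (G : SimpleGraph V) : Prop :=
  ∀ F : Set (Sym2 V), IsEdgeCut G F →
    (∀ F' : Set (Sym2 V), IsEdgeCut G F' → F.ncard ≤ F'.ncard) →
    ∃ v : V, F = G.incidenceSet v

/-- `f_S(v) = deg_G(v) - deg_{⟨S⟩_G}(v)`. -/
noncomputable def fS (G : SimpleGraph V) (S : Set V) (v : V) : ℕ :=
  (G.neighborSet v).ncard - (G.neighborSet v ∩ S).ncard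

/-- `ζ(S)`: the minimum of `f_S(u) + f_S(v)` over edges `uv` of `⟨S⟩_G`
(`⊤` if there is no such edge). -/
noncomputable def zeta (G : SimpleGraph V) (S : Set V) : ℕ∞ :=
  sInf {x : ℕ∞ | ∃ u ∈ S, ∃ v ∈ S, G.Adj u v ∧ x = ((fS G S u + fS G S v : ℕ) : ℕ∞)}

/-- A star: a tree with at most one vertex of degree at least 2. -/
def IsStar (H : SimpleGraph W) : Prop :=
  H.IsTree ∧ (internalVerts H).Subsingleton

/-- `S` is a star-subset of `V(G)`: every connected component of the induced
subgraph `⟨S⟩_G` is a star (vacuously true for `S = ∅`). -/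
def IsStarSubset (G : SimpleGraph V) (S : Set V) : Prop :=
  ∀ C : (G.induce S).ConnectedComponent, IsStar ((G.induce S).induce C.supp)

/-- `τ'(G)`: the maximum over proper star-subsets `S ⊊ V(G)` of
`min (τ(G - S)) (ζ(S))`. -/
noncomputable def tauPrime (G : SimpleGraph V) : ℕ :=
  sSup {m | ∃ S : Set V, S ≠ Set.univ ∧ IsStarSubset G S ∧
    m = (min ((tau (G.induce Sᶜ) : ℕ∞)) (zeta G S)).toNat}

/-- A connected dominating set of `G`. -/
def IsConnDomSet (G : SimpleGraph V) (S : Set V) : Prop :=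
  S.Nonempty ∧ (G.induce S).Connected ∧ ∀ v ∉ S, ∃ u ∈ S, G.Adj v u

/-- `γ_c(G)`: the minimum cardinality of a connected dominating set of `G`. -/
noncomputable def gammaC (G : SimpleGraph V) : ℕ :=
  sInf {n | ∃ S : Set V, IsConnDomSet G S ∧ S.ncard = n}

/-- The bipartite subgraph `⟨A, B⟩_G` of `G` induced by the partite sets `A` and `B`:
its vertex set is `A ∪ B` and its edges are the edges of `G` with one endpoint in `A`
and the other in `B`. -/
def bipartiteBetween (G : SimpleGraph V) (A B : Set V) : SimpleGraph ↥(A ∪ B) where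
  Adj u v := G.Adj ↑u ↑v ∧ (((u : V) ∈ A ∧ (v : V) ∈ B) ∨ ((u : V) ∈ B ∧ (v : V) ∈ A))
  symm := by
    refine ⟨?_⟩
    rintro u v ⟨h, hc | hc⟩
    · exact ⟨h.symm, Or.inr ⟨hc.2, hc.1⟩⟩
    · exact ⟨h.symm, Or.inl ⟨hc.2, hc.1⟩⟩
  loopless := by
    refine ⟨?_⟩
    rintro u ⟨h, -⟩
    exact G.loopless.irrefl _ h

/-- Every connected component of `H` contains a cycle. -/
def EveryComponentHasCycle (H : SimpleGraph W) : Prop :=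
  ∀ C : H.ConnectedComponent, ∃ v : W, H.connectedComponentMk v = C ∧
    ∃ p : H.Walk v v, p.IsCycle

/-- `H` is a path graph: a tree in which every vertex has degree at most 2. -/
def IsPathGraph (H : SimpleGraph W) : Prop :=
  H.IsTree ∧ ∀ v : W, (H.neighborSet v).ncard ≤ 2

end CISTPaper

namespace CISTPaper

open SimpleGraph

section AuxLemmas

variable {α : Type*} {V : Type*} {W : Type*}

lemma walk_exists_dart_fst {G : SimpleGraph α} {u : α} (q : G.Walk u u)
    (hq : ¬q.Nil) {v : α} (hv : v ∈ q.support) :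
    ∃ d ∈ q.darts, d.fst = v := by
  by_cases hvu : v = u
  · subst hvu
    rw [SimpleGraph.Walk.not_nil_iff] at hq
    obtain ⟨x, h, r, rfl⟩ := hq
    exact ⟨⟨(v, x), h⟩, by simp, rfl⟩
  · have h1 := q.map_fst_darts_append
    rw [← h1, List.mem_append] at hv
    rcases hv with hv | hv
    · obtain ⟨d, hd, rfl⟩ := List.mem_map.1 hv
      exact ⟨d, hd, rfl⟩
    · simp at hv; exact absurd hv hvu

lemma walk_exists_dart_snd {G : SimpleGraph α} {u : α} (q : G.Walk u u)
    (hq : ¬q.Nil) {v : α} (hv : v ∈ q.support) :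
    ∃ d ∈ q.darts, d.snd = v := by
  have hq' : ¬q.reverse.Nil := by
    rw [SimpleGraph.Walk.not_nil_iff_lt_length] at hq ⊢
    simpa using hq
  obtain ⟨d, hd, hdf⟩ := walk_exists_dart_fst q.reverse hq' (by simpa using hv)
  exact ⟨d.symm, (SimpleGraph.Walk.mem_darts_reverse).1 hd, hdf⟩

lemma trail_dart_eq {G : SimpleGraph α} {u w : α} {q : G.Walk u w}
    (ht : q.IsTrail) {d₁ d₂ : G.Dart} (h₁ : d₁ ∈ q.darts) (h₂ : d₂ ∈ q.darts)
    (he : d₁.edge = d₂.edge) : d₁ = d₂ := by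
  have hnd : (q.darts.map SimpleGraph.Dart.edge).Nodup := ht.edges_nodup
  exact List.inj_on_of_nodup_map hnd h₁ h₂ he

lemma parent_isTree (p : α → α) (r : α) (rank : α → ℕ)
    (hr : p r = r) (hrank : ∀ x, x ≠ r → rank (p x) < rank x) :
    (SimpleGraph.fromRel fun x y => p x = y).IsTree := by
  classical
  let T := SimpleGraph.fromRel fun x y : α => p x = y
  show T.IsTree
  have hadj : ∀ x, x ≠ r → T.Adj x (p x) := by
    intro x hx
    show (SimpleGraph.fromRel fun x y : α => p x = y).Adj x (p x)
    rw [SimpleGraph.fromRel_adj]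
    have hne : x ≠ p x := fun h => absurd (hrank x hx) (by rw [← h]; exact lt_irrefl _)
    exact ⟨hne, Or.inl rfl⟩
  have hreach : ∀ n x, rank x ≤ n → T.Reachable x r := by
    intro n
    induction n with
    | zero =>
      intro x hx
      by_cases h : x = r
      · rw [h]
      · exact absurd (lt_of_lt_of_le (hrank x h) hx) (Nat.not_lt_zero _)
    | succ n ih =>
      intro x hx
      by_cases h : x = r
      · rw [h]
      · exact (hadj x h).reachable.trans
          (ih (p x) (Nat.lt_succ_iff.mp (lt_of_lt_of_le (hrank x h) hx)))
  have hconn : T.Connected := by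
    rw [SimpleGraph.connected_iff]
    exact ⟨fun x y => (hreach (rank x) x le_rfl).trans (hreach (rank y) y le_rfl).symm, ⟨r⟩⟩
  refine ⟨hconn, ?_⟩
  intro u c hc
  have hsupne : c.support.toFinset.Nonempty := ⟨u, by simp⟩
  obtain ⟨v, hvmem, hvmax⟩ := Finset.exists_max_image c.support.toFinset rank hsupne
  rw [List.mem_toFinset] at hvmem
  obtain ⟨d₁, hd₁, hd₁f⟩ := walk_exists_dart_fst c hc.not_nil hvmem
  obtain ⟨d₂, hd₂, hd₂s⟩ := walk_exists_dart_snd c hc.not_nil hvmem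
  have h₁ : T.Adj v d₁.snd := hd₁f ▸ d₁.adj
  have h₂ : T.Adj d₂.fst v := hd₂s ▸ d₂.adj
  have hs₁ : d₁.snd ∈ c.support := c.dart_snd_mem_support_of_mem_darts hd₁
  have hs₂ : d₂.fst ∈ c.support := c.dart_fst_mem_support_of_mem_darts hd₂
  have h₁' := (SimpleGraph.fromRel_adj _ v d₁.snd).1 h₁
  have h₂' := (SimpleGraph.fromRel_adj _ d₂.fst v).1 h₂
  have e₁ : p v = d₁.snd := by
    obtain ⟨hne, h | h⟩ := h₁'
    · exact h
    · by_cases hrd : d₁.snd = r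
      · rw [hrd, hr] at h; exact absurd (hrd.trans h) (Ne.symm hne)
      · exact absurd (hvmax _ (List.mem_toFinset.2 hs₁))
          (not_le.2 (h ▸ hrank _ hrd))
  have hvr : v ≠ r := by
    intro hvr
    exact h₁'.1 (by rw [hvr, ← e₁, hvr, hr])
  have e₂ : p v = d₂.fst := by
    obtain ⟨hne, h | h⟩ := h₂'
    · by_cases hrd : d₂.fst = r
      · exact absurd (by rw [← h, hrd, hr]) hvr.symm
      · exact absurd (hvmax _ (List.mem_toFinset.2 hs₂))
          (not_le.2 (h ▸ hrank _ hrd))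
    · exact h
  have hedge : d₁.edge = d₂.edge := by
    have e1 : d₁.edge = s(d₁.fst, d₁.snd) := rfl
    have e2 : d₂.edge = s(d₂.fst, d₂.snd) := rfl
    rw [e1, e2, hd₁f, hd₂s, ← e₁, ← e₂, Sym2.eq_swap]
  have hdd : d₁ = d₂ := trail_dart_eq hc.isTrail hd₁ hd₂ hedge
  have hvp : v = p v := by
    calc v = d₁.fst := hd₁f.symm
    _ = d₂.fst := by rw [hdd]
    _ = p v := e₂.symm
  exact absurd (hrank v hvr) (by rw [← hvp]; exact lt_irrefl _)

lemma parent_neighborSet_subset (p : α → α) {v : α} (hv : ∀ y, p y ≠ v) :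
    (SimpleGraph.fromRel fun x y => p x = y).neighborSet v ⊆ {p v} := by
  intro u hu
  rw [SimpleGraph.mem_neighborSet, SimpleGraph.fromRel_adj] at hu
  obtain ⟨hne, h | h⟩ := hu
  · exact h ▸ rfl
  · exact absurd h (hv u)

lemma exists_good_choice (H : SimpleGraph W)
    (h : EveryComponentHasCycle H) :
    ∃ c : W → W, (∀ v, H.Adj v (c v)) ∧ ∀ v, c (c v) ≠ v := by
  classical
  choose w hw cyc hcyc using h
  have hreach : ∀ v : W, H.Reachable v (w (H.connectedComponentMk v)) :=
    fun v => ((SimpleGraph.ConnectedComponent.eq).1 (hw _)).symm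
  have hstep : ∀ v : W, v ∉ (cyc (H.connectedComponentMk v)).support →
      ∃ u, H.Adj v u ∧
        H.dist u (w (H.connectedComponentMk u)) < H.dist v (w (H.connectedComponentMk v)) := by
    intro v hv
    have hne : v ≠ w (H.connectedComponentMk v) := by
      intro hveq
      apply hv
      rw [hveq, hw]
      exact SimpleGraph.Walk.start_mem_support _
    have hpos : H.dist v (w (H.connectedComponentMk v)) ≠ 0 :=
      fun h0 => hne ((hreach v).dist_eq_zero_iff.1 h0)
    obtain ⟨q, hq⟩ := (hreach v).exists_walk_length_eq_dist
    have hqn : ¬q.Nil := by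
      rw [SimpleGraph.Walk.not_nil_iff_lt_length]
      omega
    rw [SimpleGraph.Walk.not_nil_iff] at hqn
    obtain ⟨u, hadj, q', rfl⟩ := hqn
    refine ⟨u, hadj, ?_⟩
    have hmk : H.connectedComponentMk u = H.connectedComponentMk v :=
      SimpleGraph.ConnectedComponent.sound hadj.symm.reachable
    rw [hmk]
    calc H.dist u (w (H.connectedComponentMk v)) ≤ q'.length := SimpleGraph.dist_le q'
    _ < (SimpleGraph.Walk.cons hadj q').length := by rw [SimpleGraph.Walk.length_cons]; omega
    _ = H.dist v (w (H.connectedComponentMk v)) := hq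
  have hnxt : ∀ v : W, v ∈ (cyc (H.connectedComponentMk v)).support →
      ∃ d ∈ (cyc (H.connectedComponentMk v)).darts, d.fst = v :=
    fun v hv => walk_exists_dart_fst _ (hcyc _).not_nil hv
  obtain ⟨c, hcpos, hcneg⟩ : ∃ c : W → W,
      (∀ v (h : v ∈ (cyc (H.connectedComponentMk v)).support), c v = ((hnxt v h).choose).snd) ∧
      (∀ v (h : v ∉ (cyc (H.connectedComponentMk v)).support), c v = (hstep v h).choose) :=
    ⟨fun v => if hv : v ∈ (cyc (H.connectedComponentMk v)).support
      then ((hnxt v hv).choose).snd else (hstep v hv).choose,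
     fun v h => dif_pos h, fun v h => dif_neg h⟩
  refine ⟨c, ?_, ?_⟩
  · intro v
    by_cases hv : v ∈ (cyc (H.connectedComponentMk v)).support
    · rw [hcpos v hv]
      obtain ⟨hd, hf⟩ := (hnxt v hv).choose_spec
      have := (hnxt v hv).choose.adj
      rwa [hf] at this
    · rw [hcneg v hv]
      exact (hstep v hv).choose_spec.1
  · intro v
    by_cases hv : v ∈ (cyc (H.connectedComponentMk v)).support
    · rw [hcpos v hv]
      obtain ⟨hd, hf⟩ := (hnxt v hv).choose_spec
      set d := (hnxt v hv).choose with hddef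
      set u := d.snd with hudef
      have hadj : H.Adj v u := hf ▸ d.adj
      have hmk : H.connectedComponentMk u = H.connectedComponentMk v :=
        SimpleGraph.ConnectedComponent.sound hadj.symm.reachable
      have humem : u ∈ (cyc (H.connectedComponentMk u)).support := by
        rw [hmk]
        exact SimpleGraph.Walk.dart_snd_mem_support_of_mem_darts _ hd
      rw [hcpos u humem]
      intro heq
      obtain ⟨hd2, hf2⟩ := (hnxt u humem).choose_spec
      set d2 := (hnxt u humem).choose with hd2def
      have hd2' : d2 ∈ (cyc (H.connectedComponentMk v)).darts := by rw [← hmk]; exact hd2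
      have hedge : d2.edge = d.edge := by
        have e1 : d2.edge = s(d2.fst, d2.snd) := rfl
        have e2 : d.edge = s(d.fst, d.snd) := rfl
        rw [e1, e2, hf, hf2, heq, ← hudef, Sym2.eq_swap]
      have : d2 = d := trail_dart_eq (hcyc _).isTrail hd2' hd hedge
      have : u = v := by rw [← hf2, this, hf]
      exact hadj.ne' this
    · rw [hcneg v hv]
      obtain ⟨hadj, hlt⟩ := (hstep v hv).choose_spec
      set u := (hstep v hv).choose with hudef
      have hmk : H.connectedComponentMk u = H.connectedComponentMk v :=
        SimpleGraph.ConnectedComponent.sound hadj.symm.reachable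
      by_cases hu : u ∈ (cyc (H.connectedComponentMk u)).support
      · rw [hcpos u hu]
        intro heq
        obtain ⟨hd2, hf2⟩ := (hnxt u hu).choose_spec
        have hmem : ((hnxt u hu).choose).snd ∈ (cyc (H.connectedComponentMk u)).support :=
          SimpleGraph.Walk.dart_snd_mem_support_of_mem_darts _ hd2
        rw [heq, hmk] at hmem
        exact hv hmem
      · rw [hcneg u hu]
        intro heq
        obtain ⟨hadj2, hlt2⟩ := (hstep u hu).choose_spec
        rw [heq] at hlt2
        omega

lemma pair_choice (G : SimpleGraph V) (A B : Set V)
    (hd : Disjoint A B)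
    (hc : EveryComponentHasCycle (bipartiteBetween G A B)) :
    ∃ f g : V → V,
      (∀ v ∈ B, f v ∈ A ∧ G.Adj v (f v)) ∧
      (∀ u ∈ A, g u ∈ B ∧ G.Adj u (g u)) ∧
      (∀ u ∈ A, ∀ v ∈ B, ¬(f v = u ∧ g u = v)) := by
  classical
  obtain ⟨c, hadj, hcc⟩ := exists_good_choice _ hc
  obtain ⟨f, hf⟩ : ∃ f : V → V, ∀ v (hv : v ∈ B), f v = ↑(c ⟨v, Or.inr hv⟩) :=
    ⟨fun v => if hv : v ∈ B then ↑(c ⟨v, Or.inr hv⟩) else v, fun v hv => dif_pos hv⟩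
  obtain ⟨g, hg⟩ : ∃ g : V → V, ∀ u (hu : u ∈ A), g u = ↑(c ⟨u, Or.inl hu⟩) :=
    ⟨fun u => if hu : u ∈ A then ↑(c ⟨u, Or.inl hu⟩) else u, fun u hu => dif_pos hu⟩
  refine ⟨f, g, ?_, ?_, ?_⟩
  · intro v hv
    rw [hf v hv]
    obtain ⟨hG, hside⟩ := hadj ⟨v, Or.inr hv⟩
    refine ⟨?_, hG⟩
    rcases hside with ⟨h1, _⟩ | ⟨_, h2⟩
    · exact absurd hv (Set.disjoint_left.1 hd h1)
    · exact h2
  · intro u hu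
    rw [hg u hu]
    obtain ⟨hG, hside⟩ := hadj ⟨u, Or.inl hu⟩
    refine ⟨?_, hG⟩
    rcases hside with ⟨_, h1⟩ | ⟨h2, _⟩
    · exact h1
    · exact absurd h2 (Set.disjoint_left.1 hd hu)
  · rintro u hu v hv ⟨h1, h2⟩
    rw [hf v hv] at h1
    rw [hg u hu] at h2
    have e1 : c ⟨v, Or.inr hv⟩ = ⟨u, Or.inl hu⟩ := Subtype.ext h1
    have e2 : c ⟨u, Or.inl hu⟩ = ⟨v, Or.inr hv⟩ := Subtype.ext h2
    exact hcc ⟨v, Or.inr hv⟩ (by rw [e1, e2])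

end AuxLemmas

/-- If a finite simple graph `G` has `k` pairwise disjoint connected
dominating sets `V_1, …, V_k` such that for all `i ≠ j` every connected component of
the bipartite subgraph `⟨V_i, V_j⟩_G` contains a cycle, then for every
`S ⊆ V(G) \ (V_1 ∪ … ∪ V_k)`, the graph `G - S` has `k` completely independent
spanning trees. -/
theorem stmt_10 {V : Type*} [Fintype V] (G : SimpleGraph V) (k : ℕ)
    (Vs : Fin k → Set V)
    (hdom : ∀ i, IsConnDomSet G (Vs i))
    (hdisj : ∀ i j, i ≠ j → Disjoint (Vs i) (Vs j))
    (hcyc : ∀ i j, i ≠ j → EveryComponentHasCycle (bipartiteBetween G (Vs i) (Vs j)))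
    (S : Set V) (hS : S ⊆ (⋃ i, Vs i)ᶜ) :
    HasCIST (G.induce Sᶜ) k := by
  classical
  rcases Nat.eq_zero_or_pos k with rfl | hk
  · exact ⟨Fin.elim0, fun i => i.elim0, fun i => i.elim0⟩
  have hVsub : ∀ i, Vs i ⊆ Sᶜ := by
    intro i v hv hvS
    exact hS hvS (Set.mem_iUnion.2 ⟨i, hv⟩)
  have hrootex : ∀ i, ∃ x, x ∈ Vs i := fun i => (hdom i).1
  obtain ⟨root, hrootmem⟩ : ∃ root : Fin k → V, ∀ i, root i ∈ Vs i :=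
    ⟨fun i => (hrootex i).choose, fun i => (hrootex i).choose_spec⟩
  obtain ⟨dI, hdI⟩ : ∃ dI : Fin k → V → ℕ, ∀ i x (hx : x ∈ Vs i),
      dI i x = (G.induce (Vs i)).dist ⟨x, hx⟩ ⟨root i, hrootmem i⟩ :=
    ⟨fun i x => if hx : x ∈ Vs i then
        (G.induce (Vs i)).dist ⟨x, hx⟩ ⟨root i, hrootmem i⟩ else 0,
     fun i x hx => dif_pos hx⟩
  have hinner : ∀ i x (hx : x ∈ Vs i), x ≠ root i →
      ∃ u, u ∈ Vs i ∧ G.Adj x u ∧ dI i u < dI i x := by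
    intro i x hx hne
    have hconn := (hdom i).2.1
    have hreach : (G.induce (Vs i)).Reachable ⟨x, hx⟩ ⟨root i, hrootmem i⟩ :=
      hconn.preconnected _ _
    have hd0 : (G.induce (Vs i)).dist ⟨x, hx⟩ ⟨root i, hrootmem i⟩ ≠ 0 :=
      fun h0 => hne (congrArg Subtype.val (hreach.dist_eq_zero_iff.1 h0))
    obtain ⟨q, hq⟩ := hreach.exists_walk_length_eq_dist
    have hqn : ¬q.Nil := by
      rw [SimpleGraph.Walk.not_nil_iff_lt_length]
      omega
    rw [SimpleGraph.Walk.not_nil_iff] at hqn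
    obtain ⟨u, hadj, q', rfl⟩ := hqn
    refine ⟨↑u, u.2, hadj, ?_⟩
    rw [hdI i ↑u u.2, hdI i x hx]
    have h1 : (G.induce (Vs i)).dist u ⟨root i, hrootmem i⟩ ≤ q'.length :=
      SimpleGraph.dist_le q'
    rw [SimpleGraph.Walk.length_cons] at hq
    have heta : (⟨↑u, u.2⟩ : ↥(Vs i)) = u := rfl
    rw [heta]
    omega
  have hdomstep : ∀ i (x : V), x ∉ Vs i → ∃ u, u ∈ Vs i ∧ G.Adj x u := by
    intro i x hx
    obtain ⟨u, hu, ha⟩ := (hdom i).2.2 x hx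
    exact ⟨u, hu, ha⟩
  have hpairex : ∀ i j : Fin k, ∃ f g : V → V, i ≠ j →
      ((∀ v ∈ Vs j, f v ∈ Vs i ∧ G.Adj v (f v)) ∧
       (∀ u ∈ Vs i, g u ∈ Vs j ∧ G.Adj u (g u)) ∧
       (∀ u ∈ Vs i, ∀ v ∈ Vs j, ¬(f v = u ∧ g u = v))) := by
    intro i j
    by_cases hij : i = j
    · exact ⟨id, id, fun h => absurd hij h⟩
    · obtain ⟨f, g, h1, h2, h3⟩ := pair_choice G (Vs i) (Vs j) (hdisj i j hij) (hcyc i j hij)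
      exact ⟨f, g, fun _ => ⟨h1, h2, h3⟩⟩
  choose fF gF hFG using hpairex
  obtain ⟨att, hattlt, hattge⟩ : ∃ att : Fin k → Fin k → V → V,
      (∀ i j, i < j → att i j = fF i j) ∧ (∀ i j, ¬i < j → att i j = gF j i) :=
    ⟨fun i j => if h : i < j then fF i j else gF j i,
     fun i j h => dif_pos h, fun i j h => dif_neg h⟩
  have hattmem : ∀ i j, i ≠ j → ∀ v ∈ Vs j, att i j v ∈ Vs i ∧ G.Adj v (att i j v) := by
    intro i j hij v hv
    rcases lt_or_gt_of_ne hij with h | h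
    · rw [hattlt i j h]
      exact ((hFG i j hij).1) v hv
    · rw [hattge i j (not_lt.2 h.le)]
      exact ((hFG j i (Ne.symm hij)).2.1) v hv
  have hattconf : ∀ i j, i ≠ j → ∀ u ∈ Vs i, ∀ v ∈ Vs j,
      ¬(att i j v = u ∧ att j i u = v) := by
    rintro i j hij u hu v hv ⟨h1, h2⟩
    rcases lt_or_gt_of_ne hij with h | h
    · rw [hattlt i j h] at h1
      rw [hattge j i (not_lt.2 h.le)] at h2
      exact (hFG i j hij).2.2 u hu v hv ⟨h1, h2⟩
    · rw [hattge i j (not_lt.2 h.le)] at h1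
      rw [hattlt j i h] at h2
      exact (hFG j i (Ne.symm hij)).2.2 v hv u hu ⟨h2, h1⟩
  have hidxu : ∀ (x : V) (hx : x ∈ ⋃ j, Vs j) (j : Fin k), x ∈ Vs j →
      (Set.mem_iUnion.1 hx).choose = j := by
    intro x hx j hj
    by_contra hne
    exact Set.disjoint_left.1 (hdisj _ j hne) (Set.mem_iUnion.1 hx).choose_spec hj
  have hparex : ∀ (i : Fin k) (x : V), ∃ y,
      y ∈ Vs i ∧
      (x ≠ root i → G.Adj x y) ∧
      (∀ _ : x ∈ Vs i, x ≠ root i → dI i y < dI i x) ∧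
      (x = root i → y = x) ∧
      (∀ j, j ≠ i → x ∈ Vs j → y = att i j x) := by
    intro i x
    by_cases hx : x ∈ Vs i
    · by_cases hxr : x = root i
      · refine ⟨x, hx, fun h => absurd hxr h, fun _ h => absurd hxr h, fun _ => rfl, ?_⟩
        intro j hj hxj
        exact absurd hx (Set.disjoint_left.1 (hdisj j i hj) hxj)
      · obtain ⟨u, hu, ha, hlt⟩ := hinner i x hx hxr
        refine ⟨u, hu, fun _ => ha, fun _ _ => hlt, fun h => absurd h hxr, ?_⟩
        intro j hj hxj
        exact absurd hx (Set.disjoint_left.1 (hdisj j i hj) hxj)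
    · by_cases hxu : x ∈ ⋃ j, Vs j
      · have hxj0 : x ∈ Vs ((Set.mem_iUnion.1 hxu).choose) := (Set.mem_iUnion.1 hxu).choose_spec
        have hj0i : i ≠ (Set.mem_iUnion.1 hxu).choose := fun h => hx (h ▸ hxj0)
        obtain ⟨hmem, hadj⟩ := hattmem i _ hj0i x hxj0
        refine ⟨att i ((Set.mem_iUnion.1 hxu).choose) x, hmem, fun _ => hadj,
                fun hx' => absurd hx' hx,
                fun h => absurd (by rw [h]; exact hrootmem i) hx, ?_⟩
        intro j hj hxj
        rw [hidxu x hxu j hxj]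
      · obtain ⟨u, hu, ha⟩ := hdomstep i x hx
        refine ⟨u, hu, fun _ => ha, fun hx' => absurd hx' hx,
                fun h => absurd (by rw [h]; exact hrootmem i) hx, ?_⟩
        intro j hj hxj
        exact absurd (Set.mem_iUnion.2 ⟨j, hxj⟩) hxu
  choose par hparmem hparadj hparrank hparroot hparout using hparex
  obtain ⟨rk, hrkin, hrkout⟩ : ∃ rk : Fin k → V → ℕ,
      (∀ i x, x ∈ Vs i → rk i x = dI i x) ∧
      (∀ i x, x ∉ Vs i → rk i x = (Finset.univ.sup (dI i)) + 1) :=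
    ⟨fun i x => if x ∈ Vs i then dI i x else (Finset.univ.sup (dI i)) + 1,
     fun i x hx => if_pos hx, fun i x hx => if_neg hx⟩
  have hrank : ∀ i (x : V), x ≠ root i → rk i (par i x) < rk i x := by
    intro i x hne
    have hm := hparmem i x
    rw [hrkin i _ hm]
    by_cases hx : x ∈ Vs i
    · rw [hrkin i x hx]
      exact hparrank i x hx hne
    · rw [hrkout i x hx]
      exact Nat.lt_succ_of_le (Finset.le_sup (Finset.mem_univ _))
  haveI : Nonempty ↥Sᶜ := ⟨⟨root ⟨0, hk⟩, hVsub _ (hrootmem _)⟩⟩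
  obtain ⟨par', hpar'⟩ : ∃ par' : Fin k → ↥Sᶜ → ↥Sᶜ, ∀ i x, (par' i x : V) = par i ↑x :=
    ⟨fun i x => ⟨par i ↑x, hVsub i (hparmem i ↑x)⟩, fun i x => rfl⟩
  refine ⟨fun i => SimpleGraph.fromRel fun x y => par' i x = y, ?_, ?_⟩
  · intro i
    have key : ∀ x y : ↥Sᶜ, x ≠ y → par' i x = y → G.Adj ↑x ↑y := by
      intro x y hne h
      have hval : par i ↑x = ↑y := (hpar' i x).symm.trans (congrArg Subtype.val h)
      have hxr : (x : V) ≠ root i := by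
        intro hx
        have : (y : V) = (x : V) := by rw [← hval, hparroot i ↑x hx]
        exact hne (Subtype.ext this.symm)
      have := hparadj i ↑x hxr
      rwa [hval] at this
    constructor
    · intro x y hxy
      rw [SimpleGraph.fromRel_adj] at hxy
      obtain ⟨hne, h | h⟩ := hxy
      · exact SimpleGraph.comap_adj.2 (key x y hne h)
      · exact SimpleGraph.comap_adj.2 (key y x hne.symm h).symm
    · exact parent_isTree (par' i) ⟨root i, hVsub i (hrootmem i)⟩ (fun x => rk i ↑x)
        (Subtype.ext (by rw [hpar']; exact hparroot i _ rfl))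
        (fun x hx => by
          show rk i (↑(par' i x) : V) < rk i ↑x
          rw [hpar']
          exact hrank i ↑x (fun h => hx (Subtype.ext h)))
  · intro i j hij
    have key : ∀ a b : Fin k, a ≠ b → ∀ x y : ↥Sᶜ, x ≠ y → par' a x = y →
        (par' b x = y ∨ par' b y = x) → False := by
      intro a b hab x y hxy h1 h2
      have hv1 : par a ↑x = ↑y := (hpar' a x).symm.trans (congrArg Subtype.val h1)
      have hym : (y : V) ∈ Vs a := hv1 ▸ hparmem a ↑x
      rcases h2 with h2 | h2
      · have hv2 : par b ↑x = ↑y := (hpar' b x).symm.trans (congrArg Subtype.val h2)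
        have hym2 : (y : V) ∈ Vs b := hv2 ▸ hparmem b ↑x
        exact Set.disjoint_left.1 (hdisj a b hab) hym hym2
      · have hv2 : par b ↑y = ↑x := (hpar' b y).symm.trans (congrArg Subtype.val h2)
        have hxm : (x : V) ∈ Vs b := hv2 ▸ hparmem b ↑y
        have e1 : att a b ↑x = ↑y := (hparout a ↑x b (Ne.symm hab) hxm).symm.trans hv1
        have e2 : att b a ↑y = ↑x := (hparout b ↑y a hab hym).symm.trans hv2
        exact hattconf a b hab ↑y hym ↑x hxm ⟨e1, e2⟩
    constructor
    · rw [Set.disjoint_left]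
      intro e hei hej
      revert hei hej
      induction e using Sym2.ind with
      | _ x y =>
        intro hei hej
        rw [SimpleGraph.mem_edgeSet, SimpleGraph.fromRel_adj] at hei hej
        obtain ⟨hne, h1 | h1⟩ := hei <;> obtain ⟨-, h2 | h2⟩ := hej
        · exact key i j hij x y hne h1 (Or.inl h2)
        · exact key i j hij x y hne h1 (Or.inr h2)
        · exact key i j hij y x hne.symm h1 (Or.inr h2)
        · exact key i j hij y x hne.symm h1 (Or.inl h2)
    · rw [Set.disjoint_left]
      intro v hvi hvj
      have hint : ∀ a : Fin k,
          v ∈ internalVerts (SimpleGraph.fromRel fun x y => par' a x = y) →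
          (v : V) ∈ Vs a := by
        intro a hv
        by_contra hva
        have hkey : ∀ y, par' a y ≠ v := by
          intro y hy
          refine hva ?_
          rw [← congrArg Subtype.val hy, hpar' a y]
          exact hparmem a ↑y
        have hsub := parent_neighborSet_subset (par' a) hkey
        have hle : ((SimpleGraph.fromRel fun x y => par' a x = y).neighborSet v).ncard ≤ 1 := by
          calc ((SimpleGraph.fromRel fun x y => par' a x = y).neighborSet v).ncard
              ≤ ({par' a v} : Set ↥Sᶜ).ncard := Set.ncard_le_ncard hsub (Set.finite_singleton _)
            _ = 1 := Set.ncard_singleton _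
        have h2 : 2 ≤ ((SimpleGraph.fromRel fun x y => par' a x = y).neighborSet v).ncard := hv
        omega
      exact Set.disjoint_left.1 (hdisj i j hij) (hint i hvi) (hint j hvj)


end CISTPaper
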